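/- For the d-dimensional Fourier basis pair (standard basis A, Fourier basis B), and any nonzero vector ψ ∈ C^d, n_A(ψ)·n_B(ψ) ≥ d (the Donoho–Stark support uncertainty relation). -/

import Mathlib

open Complex Finset
open scoped Classical

noncomputable def dftOmega (d : ℕ) : ℂ := Complex.exp (2 * Real.pi * Complex.I / d)

/-- The j-th Fourier basis vector of `ℂ^d`, with i-th entry `ω^{ij}/√d`. -/
noncomputable def fourierVec (d : ℕ) (j : Fin d) : Fin d → ℂ :=
  fun i => dftOmega d ^ ((i : ℕ) * (j : ℕ)) / Real.sqrt d

/-- The j-th Fourier coefficient `⟨f_j, ψ⟩ = (1/√d)∑_i ω^{−ij} ψ(i)`. -/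
noncomputable def dftCoeff (d : ℕ) (ψ : Fin d → ℂ) (j : Fin d) : ℂ :=
  ∑ i, (starRingEnd ℂ) (fourierVec d j i) * ψ i

/-- Number of nonzero standard-basis coordinates of ψ. -/
noncomputable def nA (d : ℕ) (ψ : Fin d → ℂ) : ℕ :=
  (Finset.univ.filter fun i => ψ i ≠ 0).card

/-- Number of nonzero Fourier coefficients of ψ. -/
noncomputable def nB (d : ℕ) (ψ : Fin d → ℂ) : ℕ :=
  (Finset.univ.filter fun j => dftCoeff d ψ j ≠ 0).card

/-- Kirkwood-Dirac distribution `Q_{ij} = ⟨e_i,ψ⟩⟨ψ,f_j⟩⟨f_j,e_i⟩` of ψ with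
respect to the standard basis and the Fourier basis. -/
noncomputable def KD (d : ℕ) (ψ : Fin d → ℂ) (i j : Fin d) : ℂ :=
  ψ i * (∑ k, (starRingEnd ℂ) (ψ k) * fourierVec d j k) * (starRingEnd ℂ) (fourierVec d j i)

lemma abs_dftOmega (d : ℕ) : ‖dftOmega d‖ = 1 := by
  unfold dftOmega
  rw [show (2 * Real.pi * Complex.I / d : ℂ) = ((2 * Real.pi / d : ℝ) : ℂ) * Complex.I by
    push_cast; ring]
  exact Complex.norm_exp_ofReal_mul_I _

lemma normSq_pow (d m : ℕ) : dftOmega d ^ m * (starRingEnd ℂ) (dftOmega d ^ m) = 1 := by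
  rw [Complex.mul_conj]
  norm_cast
  rw [Complex.normSq_eq_norm_sq, norm_pow, abs_dftOmega]
  simp

lemma key_sum (d : ℕ) (hd : d ≠ 0) (i k : Fin d) :
    ∑ j : Fin d, (starRingEnd ℂ) (dftOmega d ^ ((k : ℕ) * (j : ℕ))) *
      dftOmega d ^ ((i : ℕ) * (j : ℕ)) = if i = k then (d : ℂ) else 0 := by
  have hω : IsPrimitiveRoot (dftOmega d) d := Complex.isPrimitiveRoot_exp d hd
  set ω := dftOmega d
  set x : ℂ := ω ^ (i : ℕ) * (starRingEnd ℂ) (ω ^ (k : ℕ)) with hx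
  have hterm : ∀ j : Fin d, (starRingEnd ℂ) (ω ^ ((k : ℕ) * (j : ℕ))) *
      ω ^ ((i : ℕ) * (j : ℕ)) = x ^ (j : ℕ) := by
    intro j
    rw [hx, mul_pow, ← map_pow, ← pow_mul, ← pow_mul]
    ring
  rw [Finset.sum_congr rfl (fun j _ => hterm j), Fin.sum_univ_eq_sum_range]
  have hxd : x ^ d = 1 := by
    rw [hx, mul_pow, ← pow_mul, ← map_pow, ← pow_mul, mul_comm (i:ℕ) d, mul_comm (k:ℕ) d,
      pow_mul, pow_mul, hω.pow_eq_one]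
    simp
  by_cases h : i = k
  · subst h
    have hx1 : x = 1 := normSq_pow d i
    simp [hx1]
  · have hx1 : x ≠ 1 := by
      intro hx1
      apply h
      have h2 : (starRingEnd ℂ) (ω ^ (k:ℕ)) * ω ^ (k:ℕ) = 1 := by
        rw [mul_comm]; exact normSq_pow d k
      have heq : ω ^ (i:ℕ) = ω ^ (k:ℕ) := by
        calc ω ^ (i:ℕ) = ω ^ (i:ℕ) * ((starRingEnd ℂ) (ω ^ (k:ℕ)) * ω ^ (k:ℕ)) := by
              rw [h2, mul_one]
          _ = x * ω ^ (k:ℕ) := by rw [hx]; ring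
          _ = ω ^ (k:ℕ) := by rw [hx1, one_mul]
      exact Fin.ext (hω.pow_inj i.isLt k.isLt heq)
    rw [geom_sum_eq hx1, hxd]
    simp [if_neg h]

lemma abs_fourierVec (d : ℕ) (j i : Fin d) :
    ‖fourierVec d j i‖ = 1 / Real.sqrt d := by
  unfold fourierVec
  rw [norm_div, norm_pow, abs_dftOmega, one_pow, Complex.norm_real, Real.norm_eq_abs,
    _root_.abs_of_nonneg (Real.sqrt_nonneg _)]

lemma fourier_inv (d : ℕ) (hd : d ≠ 0) (ψ : Fin d → ℂ) (i : Fin d) :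
    ∑ j, dftCoeff d ψ j * fourierVec d j i = ψ i := by
  have hs : ((Real.sqrt d : ℂ)) * ((Real.sqrt d : ℂ)) = (d : ℂ) := by
    norm_cast
    exact Real.mul_self_sqrt (Nat.cast_nonneg d)
  have hd0 : (d : ℂ) ≠ 0 := Nat.cast_ne_zero.mpr hd
  have hstep : ∀ j : Fin d, dftCoeff d ψ j * fourierVec d j i =
      ∑ k : Fin d, (starRingEnd ℂ) (dftOmega d ^ ((k:ℕ) * (j:ℕ))) *
        dftOmega d ^ ((i:ℕ) * (j:ℕ)) * ψ k / (d : ℂ) := by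
    intro j
    unfold dftCoeff fourierVec
    rw [Finset.sum_mul]
    refine Finset.sum_congr rfl fun k _ => ?_
    rw [map_div₀, Complex.conj_ofReal, ← hs]
    have hsne : ((Real.sqrt d : ℂ)) ≠ 0 := by
      intro h0
      rw [h0, mul_zero] at hs
      exact hd0 hs.symm
    field_simp
  rw [Finset.sum_congr rfl (fun j _ => hstep j), Finset.sum_comm]
  have hcol : ∀ k : Fin d, ∑ j : Fin d, (starRingEnd ℂ) (dftOmega d ^ ((k:ℕ) * (j:ℕ))) *
      dftOmega d ^ ((i:ℕ) * (j:ℕ)) * ψ k / (d : ℂ)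
      = (if i = k then (d : ℂ) else 0) * ψ k / (d : ℂ) := by
    intro k
    rw [← Finset.sum_div, ← Finset.sum_mul, key_sum d hd i k]
  rw [Finset.sum_congr rfl (fun k _ => hcol k)]
  simp only [ite_mul, zero_mul, ite_div, zero_div, Finset.sum_ite_eq, Finset.mem_univ, if_true]
  field_simp

theorem donoho_stark (d : ℕ) (hd : 1 ≤ d) (ψ : Fin d → ℂ) (hψ : ψ ≠ 0) :
    d ≤ nA d ψ * nB d ψ := by
  have hd0 : d ≠ 0 := by omega
  set T := Finset.univ.filter (fun i => ψ i ≠ 0) with hT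
  set W := Finset.univ.filter (fun j => dftCoeff d ψ j ≠ 0) with hW
  obtain ⟨i0, -, hi0⟩ := Finset.exists_max_image Finset.univ
    (fun i => ‖ψ i‖) ⟨⟨0, hd⟩, Finset.mem_univ _⟩
  obtain ⟨j0, -, hj0⟩ := Finset.exists_max_image Finset.univ
    (fun j => ‖dftCoeff d ψ j‖) ⟨⟨0, hd⟩, Finset.mem_univ _⟩
  set M := ‖ψ i0‖ with hM
  set M' := ‖dftCoeff d ψ j0‖ with hM'
  have hMpos : 0 < M := by
    obtain ⟨i, hi⟩ := Function.ne_iff.mp hψ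
    have : ψ i ≠ 0 := hi
    exact lt_of_lt_of_le (norm_pos_iff.mpr this) (hi0 i (Finset.mem_univ i))
  set s := Real.sqrt d with hsdef
  have hs0 : 0 < s := Real.sqrt_pos.mpr (by positivity)
  have hss : s * s = d := Real.mul_self_sqrt (Nat.cast_nonneg d)
  -- Bound A : M' ≤ T.card * M / s
  have hA : M' ≤ (T.card : ℝ) * (M / s) := by
    have h1 : dftCoeff d ψ j0 = ∑ i ∈ T, (starRingEnd ℂ) (fourierVec d j0 i) * ψ i := by
      unfold dftCoeff
      exact (Finset.sum_filter_of_ne (fun i _ hne => by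
        intro h0; apply hne; rw [h0, mul_zero])).symm
    calc M' = ‖∑ i ∈ T, (starRingEnd ℂ) (fourierVec d j0 i) * ψ i‖ := by
          rw [hM', h1]
      _ ≤ ∑ i ∈ T, ‖(starRingEnd ℂ) (fourierVec d j0 i) * ψ i‖ :=
          norm_sum_le _ _
      _ ≤ ∑ _i ∈ T, M / s := by
          refine Finset.sum_le_sum fun i _ => ?_
          rw [norm_mul, Complex.norm_conj, abs_fourierVec, div_mul_eq_mul_div, one_mul]
          gcongr
          exact hi0 i (Finset.mem_univ i)
      _ = (T.card : ℝ) * (M / s) := by rw [Finset.sum_const, nsmul_eq_mul]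
  -- Bound B : M ≤ W.card * M' / s
  have hB : M ≤ (W.card : ℝ) * (M' / s) := by
    have h1 : ψ i0 = ∑ j ∈ W, dftCoeff d ψ j * fourierVec d j i0 := by
      rw [← fourier_inv d hd0 ψ i0]
      exact (Finset.sum_filter_of_ne (fun j _ hne => by
        intro h0; apply hne; rw [h0, zero_mul])).symm
    calc M = ‖∑ j ∈ W, dftCoeff d ψ j * fourierVec d j i0‖ := by
          rw [hM, h1]
      _ ≤ ∑ j ∈ W, ‖dftCoeff d ψ j * fourierVec d j i0‖ :=
          norm_sum_le _ _
      _ ≤ ∑ _j ∈ W, M' / s := by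
          refine Finset.sum_le_sum fun j _ => ?_
          rw [norm_mul, abs_fourierVec, mul_div_assoc', mul_one]
          gcongr
          exact hj0 j (Finset.mem_univ j)
      _ = (W.card : ℝ) * (M' / s) := by rw [Finset.sum_const, nsmul_eq_mul]
  -- combine
  have hA' : M' * s ≤ (T.card : ℝ) * M := by
    rw [← le_div_iff₀ hs0]
    calc M' ≤ (T.card : ℝ) * (M / s) := hA
      _ = (T.card : ℝ) * M / s := by ring
  have hB' : M * s ≤ (W.card : ℝ) * M' := by
    rw [← le_div_iff₀ hs0]
    calc M ≤ (W.card : ℝ) * (M' / s) := hB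
      _ = (W.card : ℝ) * M' / s := by ring
  have hreal : (d : ℝ) ≤ (T.card : ℝ) * (W.card : ℝ) := by
    have h1 : M * s * s ≤ (W.card : ℝ) * M' * s :=
      mul_le_mul_of_nonneg_right hB' hs0.le
    have h2 : (W.card : ℝ) * (M' * s) ≤ (W.card : ℝ) * ((T.card : ℝ) * M) :=
      mul_le_mul_of_nonneg_left hA' (Nat.cast_nonneg _)
    have h3 : M * (d : ℝ) ≤ (T.card : ℝ) * (W.card : ℝ) * M := by nlinarith
    nlinarith
  have : (d : ℝ) ≤ ((nA d ψ * nB d ψ : ℕ) : ℝ) := by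
    rw [Nat.cast_mul]
    calc (d : ℝ) ≤ (T.card : ℝ) * (W.card : ℝ) := hreal
      _ = (nA d ψ : ℝ) * (nB d ψ : ℝ) := by rw [hT, hW]; rfl
  exact_mod_cast this
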